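/- Let ξ, ρ : I → ℝ be functions on an interval I = (c,d) with ρ nondecreasing, and suppose there exist constants A > 0 and θ ∈ (0,1) such that ξ(s') ≤ limsup_{s₁→s⁺} ξ(s₁) + A·|s'−s|^θ for all s < s' in I. If ξ is also lower semi-continuous and the function ẽ(t) := sup_{s ∈ (c,t)} ξ(s) is finite for each t ∈ I, then ẽ is continuous on I. -/

import Mathlib

open Set Filter

/-- Lemma 3.4 (ii) abstracted: continuity of the running supremum of a lower
semicontinuous function with a one-sided Hölder-type growth bound. -/
theorem stmt_6 (c d : ℝ) (hcd : c < d)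
    (ξ ρ : ℝ → ℝ) (hρ : MonotoneOn ρ (Ioo c d))
    (A θ : ℝ) (hA : 0 < A) (hθ : θ ∈ Ioo (0 : ℝ) 1)
    (hgrow : ∀ s ∈ Ioo c d, ∀ s' ∈ Ioo c d, s < s' →
      ξ s' ≤ Filter.limsup ξ (nhdsWithin s (Ioi s)) + A * (s' - s) ^ θ)
    (hlsc : LowerSemicontinuousOn ξ (Ioo c d))
    (hfin : ∀ t ∈ Ioo c d, BddAbove (ξ '' Ioo c t)) :
    ContinuousOn (fun t => sSup (ξ '' Ioo c t)) (Ioo c d) := by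
  have hθ0 : 0 < θ := hθ.1
  rw [Metric.continuousOn_iff]
  intro t ht ε hε
  set e : ℝ → ℝ := fun t => sSup (ξ '' Ioo c t) with he
  have hne : ∀ u ∈ Ioo c d, (ξ '' Ioo c u).Nonempty := fun u hu =>
    (nonempty_Ioo.2 hu.1).image ξ
  have hmono : ∀ u ∈ Ioo c d, ∀ v ∈ Ioo c d, u ≤ v → e u ≤ e v := by
    intro u hu v hv huv
    exact csSup_le_csSup (hfin v hv) (hne u hu) (image_mono (f := ξ) (Ioo_subset_Ioo le_rfl huv))
  obtain ⟨x, hx, hx2⟩ := exists_lt_of_lt_csSup (hne t ht) (by linarith : e t - ε/2 < e t)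
  obtain ⟨s₀, hs₀, rfl⟩ := hx
  set δ₂ : ℝ := (ε/(2*A)) ^ (θ⁻¹) with hδ₂def
  have hδ₂pos : 0 < δ₂ := Real.rpow_pos_of_pos (by positivity) _
  set s : ℝ := max s₀ (t - δ₂/2) with hsdef
  have hsc : c < s := lt_max_of_lt_left hs₀.1
  have hst : s < t := max_lt hs₀.2 (by linarith)
  have hts : t - s ≤ δ₂/2 := by
    have : t - δ₂/2 ≤ s := le_max_right _ _
    linarith
  refine ⟨min (min (t - s) (δ₂/2)) (d - t), ?_, ?_⟩
  · refine lt_min (lt_min ?_ ?_) ?_ <;> [linarith; linarith; linarith [ht.2]]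
  intro t' ht' hdist
  rw [Real.dist_eq] at hdist ⊢
  have hδ1 : |t' - t| < t - s := lt_of_lt_of_le hdist (le_trans (min_le_left _ _) (min_le_left _ _))
  have hδ2 : |t' - t| < δ₂/2 := lt_of_lt_of_le hdist (le_trans (min_le_left _ _) (min_le_right _ _))
  have hδ3 : |t' - t| < d - t := lt_of_lt_of_le hdist (min_le_right _ _)
  obtain ⟨hd1, hd2⟩ := abs_lt.mp hδ1
  obtain ⟨hd3, hd4⟩ := abs_lt.mp hδ2
  rcases le_or_gt t' t with h | h
  · -- t' ≤ t : use the point s₀ with large ξ value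
    have hst' : s < t' := by linarith
    have h1 : ξ s₀ ≤ e t' :=
      le_csSup (hfin t' ht') ⟨s₀, ⟨hs₀.1, lt_of_le_of_lt (le_max_left _ _) hst'⟩, rfl⟩
    have h2 : e t' ≤ e t := hmono t' ht' t ht h
    rw [abs_lt]
    constructor <;> linarith
  · -- t < t'
    have h2 : e t ≤ e t' := hmono t ht t' ht' h.le
    have hub : e t' ≤ e t + ε/2 := by
      apply csSup_le (hne t' ht')
      rintro x ⟨s', hs', rfl⟩
      rcases lt_or_ge s' t with h' | h'
      · have : ξ s' ≤ e t := le_csSup (hfin t ht) ⟨s', ⟨hs'.1, h'⟩, rfl⟩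
        linarith
      · have hs'd : s' ∈ Ioo c d := ⟨hs'.1, by have := abs_lt.mp hδ3; linarith [hs'.2]⟩
        have hss' : s < s' := lt_of_lt_of_le hst h'
        have hkey := hgrow s ⟨hsc, hst.trans ht.2⟩ s' hs'd hss'
        have hev : ∀ᶠ y in nhdsWithin s (Ioi s), ξ y ≤ e t := by
          filter_upwards [Ioo_mem_nhdsGT_of_mem (left_mem_Ico.mpr hst)] with y hy
          exact le_csSup (hfin t ht) ⟨y, ⟨hsc.trans hy.1, hy.2⟩, rfl⟩
        have hmem : Ioo c d ∈ nhdsWithin s (Ioi s) :=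
          mem_nhdsWithin_of_mem_nhds (isOpen_Ioo.mem_nhds ⟨hsc, hst.trans ht.2⟩)
        have hle : nhdsWithin s (Ioi s) ≤ nhdsWithin s (Ioo c d) :=
          nhdsWithin_le_of_mem hmem
        have hlow : ∀ᶠ y in nhdsWithin s (Ioi s), ξ s - 1 < ξ y :=
          hle (hlsc s ⟨hsc, hst.trans ht.2⟩ (ξ s - 1) (by linarith))
        have hcb : IsCoboundedUnder (· ≤ ·) (nhdsWithin s (Ioi s)) ξ :=
          isCoboundedUnder_le_of_eventually_le _ (hlow.mono fun y hy => hy.le)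
        have hls : Filter.limsup ξ (nhdsWithin s (Ioi s)) ≤ e t :=
          Filter.limsup_le_of_le hcb hev
        have hss2 : s' - s ≤ δ₂ := by
          have hs't' : s' < t' := hs'.2
          linarith
        have hpow : (s' - s) ^ θ ≤ δ₂ ^ θ :=
          Real.rpow_le_rpow (by linarith) hss2 hθ0.le
        have hδ₂θ : δ₂ ^ θ = ε/(2*A) :=
          Real.rpow_inv_rpow (by positivity) (ne_of_gt hθ0)
        have : A * (s' - s) ^ θ ≤ ε/2 := by
          have := mul_le_mul_of_nonneg_left hpow hA.le
          rw [hδ₂θ] at this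
          calc A * (s' - s) ^ θ ≤ A * (ε/(2*A)) := this
          _ = ε/2 := by field_simp
        linarith
    rw [abs_lt]
    constructor <;> linarith
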